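/- Let m, n be positive integers with 3 | m·n. Then N_T(m,n) ≤ 2^{4mn/3} · min(N_D(m,2n), N_D(2m,n)), where N_T(m,n) is the number of tromino tilings of R(m,n) and N_D(p,q) is the number of domino tilings of R(p,q). -/

import Mathlib

abbrev Cell : Type := ℤ × ℤ

/-- The m×n rectangle of cells (i,j), 1 ≤ i ≤ m (row), 1 ≤ j ≤ n (column). -/
def rect (m n : ℤ) : Set Cell :=
  {c : Cell | 1 ≤ c.1 ∧ c.1 ≤ m ∧ 1 ≤ c.2 ∧ c.2 ≤ n}

/-- An L-tromino: a 2×2 block minus one of its cells. -/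
def IsTromino (T : Set Cell) : Prop :=
  ∃ i j : ℤ, ∃ c : Cell,
    c ∈ ({(i, j), (i + 1, j), (i, j + 1), (i + 1, j + 1)} : Set Cell) ∧
    T = ({(i, j), (i + 1, j), (i, j + 1), (i + 1, j + 1)} : Set Cell) \ {c}

def IsHDomino (D : Set Cell) : Prop := ∃ i j : ℤ, D = {(i, j), (i, j + 1)}

def IsVDomino (D : Set Cell) : Prop := ∃ i j : ℤ, D = {(i, j), (i + 1, j)}

def IsDomino (D : Set Cell) : Prop := IsHDomino D ∨ IsVDomino D

/-- A partition of `S` into L-trominoes, identified with its set of pieces. -/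
def IsTromTiling (P : Set (Set Cell)) (S : Set Cell) : Prop :=
  (∀ p ∈ P, IsTromino p) ∧ P.PairwiseDisjoint id ∧ ⋃₀ P = S

def Tileable (S : Set Cell) : Prop := ∃ P, IsTromTiling P S

/-- A partition of `S` into dominoes, identified with its set of pieces. -/
def IsDominoTiling (P : Set (Set Cell)) (S : Set Cell) : Prop :=
  (∀ p ∈ P, IsDomino p) ∧ P.PairwiseDisjoint id ∧ ⋃₀ P = S

/-- A partition of `S` into `k` L-trominoes and exactly one piece satisfying `dom`. -/
def IsMixedTiling (P : Set (Set Cell)) (S : Set Cell)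
    (dom : Set Cell → Prop) (k : ℕ) : Prop :=
  P.PairwiseDisjoint id ∧ ⋃₀ P = S ∧
  (∀ p ∈ P, IsTromino p ∨ dom p) ∧
  {p ∈ P | dom p}.ncard = 1 ∧ {p ∈ P | IsTromino p}.ncard = k

namespace TB

def tr (a : Cell) : Fin 4 → Set Cell
  | 0 => {a, (a.1 + 1, a.2 - 1), (a.1 + 1, a.2)}
  | 1 => {a, (a.1 + 1, a.2), (a.1 + 1, a.2 + 1)}
  | 2 => {a, (a.1, a.2 + 1), (a.1 + 1, a.2 + 1)}
  | 3 => {a, (a.1, a.2 + 1), (a.1 + 1, a.2)}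

def klt (c d : Cell) : Prop := c.1 < d.1 ∨ (c.1 = d.1 ∧ c.2 < d.2)

lemma klt_asymm {c d : Cell} (h1 : klt c d) (h2 : klt d c) : False := by
  obtain ⟨c1, c2⟩ := c; obtain ⟨d1, d2⟩ := d
  simp only [klt] at h1 h2; omega

lemma klt_irrefl {c : Cell} (h : klt c c) : False := by
  simp only [klt] at h; omega

lemma tromino_iff {T : Set Cell} : IsTromino T ↔ ∃ a : Cell, ∃ s : Fin 4, T = tr a s := by
  constructor
  · rintro ⟨i, j, c, hc, rfl⟩
    rcases hc with h | h | h | h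
    · exact ⟨(i, j + 1), 0, by subst h; ext ⟨x, y⟩; simp [tr, Prod.ext_iff]; omega⟩
    · exact ⟨(i, j), 2, by subst h; ext ⟨x, y⟩; simp [tr, Prod.ext_iff]; omega⟩
    · exact ⟨(i, j), 1, by subst h; ext ⟨x, y⟩; simp [tr, Prod.ext_iff]; omega⟩
    · exact ⟨(i, j), 3, by subst h; ext ⟨x, y⟩; simp [tr, Prod.ext_iff]; omega⟩
  · rintro ⟨⟨a1, a2⟩, s, rfl⟩
    fin_cases s
    · exact ⟨a1, a2 - 1, (a1, a2 - 1), by simp, by ext ⟨x, y⟩; simp [tr, Prod.ext_iff]; omega⟩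
    · exact ⟨a1, a2, (a1, a2 + 1), by simp, by ext ⟨x, y⟩; simp [tr, Prod.ext_iff]; omega⟩
    · exact ⟨a1, a2, (a1 + 1, a2), by simp, by ext ⟨x, y⟩; simp [tr, Prod.ext_iff]; omega⟩
    · exact ⟨a1, a2, (a1 + 1, a2 + 1), by simp, by ext ⟨x, y⟩; simp [tr, Prod.ext_iff]; omega⟩

lemma mem_tr (a : Cell) (s : Fin 4) : a ∈ tr a s := by
  fin_cases s <;> simp [tr]

lemma mem_tr_klt {a c : Cell} {s : Fin 4} (h : c ∈ tr a s) : c = a ∨ klt a c := by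
  obtain ⟨a1, a2⟩ := a; obtain ⟨c1, c2⟩ := c
  fin_cases s <;> simp [tr, Prod.ext_iff, klt] at h ⊢ <;> omega

lemma tr_inj {a b : Cell} {s t : Fin 4} (h : tr a s = tr b t) : a = b ∧ s = t := by
  have hab : a = b := by
    have h1 := mem_tr_klt (h ▸ mem_tr b t)
    have h2 := mem_tr_klt (h.symm ▸ mem_tr a s)
    obtain ⟨a1, a2⟩ := a; obtain ⟨b1, b2⟩ := b
    simp [klt, Prod.ext_iff] at h1 h2 ⊢
    omega
  subst hab
  refine ⟨rfl, ?_⟩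
  obtain ⟨a1, a2⟩ := a
  rw [Set.ext_iff] at h
  have h1 := h (a1 + 1, a2 - 1)
  have h2 := h (a1 + 1, a2)
  have h3 := h (a1 + 1, a2 + 1)
  have h4 := h (a1, a2 + 1)
  fin_cases s <;> fin_cases t <;>
    first
    | rfl
    | ((exfalso; simp [tr, Prod.ext_iff] at h1 h2 h3 h4) <;> omega)

lemma ncard_tr (a : Cell) (s : Fin 4) : (tr a s).ncard = 3 := by
  obtain ⟨a1, a2⟩ := a
  fin_cases s <;> simp only [tr] <;> rw [Set.ncard_eq_three] <;>
    exact ⟨_, _, _, by simp only [ne_eq, Prod.mk.injEq]; omega,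
      by simp only [ne_eq, Prod.mk.injEq]; omega,
      by simp only [ne_eq, Prod.mk.injEq]; omega, rfl⟩

lemma finite_tr (a : Cell) (s : Fin 4) : (tr a s).Finite := by
  fin_cases s <;> exact (Set.finite_singleton _).insert _ |>.insert _

lemma exists_klt_min {S : Set Cell} (hS : S.Finite) (hne : S.Nonempty) :
    ∃ c ∈ S, ∀ d ∈ S, c = d ∨ klt c d := by
  obtain ⟨c, hc, hmin⟩ := hS.toFinset.exists_min_image (fun c => toLex c)
    (by simpa using hne)
  refine ⟨c, by simpa using hc, fun d hd => ?_⟩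
  have h := hmin d (by simpa using hd)
  rw [Prod.Lex.le_iff] at h
  obtain ⟨c1, c2⟩ := c; obtain ⟨d1, d2⟩ := d
  simp only [klt, Prod.ext_iff]
  rcases h with h | ⟨h1, h2⟩
  · right; left; exact h
  · simp at h1 h2
    rcases eq_or_lt_of_le h2 with h2 | h2
    · left; exact ⟨h1, h2⟩
    · right; right; exact ⟨h1, h2⟩

attribute [local instance] Classical.propDecidable

noncomputable def anch (T : Set Cell) : Cell :=
  if h : ∃ p : Cell × Fin 4, T = tr p.1 p.2 then h.choose.1 else (0, 0)

noncomputable def shp (T : Set Cell) : Fin 4 :=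
  if h : ∃ p : Cell × Fin 4, T = tr p.1 p.2 then h.choose.2 else 0

lemma anch_tr (a : Cell) (s : Fin 4) : anch (tr a s) = a := by
  have h : ∃ p : Cell × Fin 4, tr a s = tr p.1 p.2 := ⟨(a, s), rfl⟩
  rw [anch, dif_pos h]
  exact (tr_inj h.choose_spec.symm).1

lemma shp_tr (a : Cell) (s : Fin 4) : shp (tr a s) = s := by
  have h : ∃ p : Cell × Fin 4, tr a s = tr p.1 p.2 := ⟨(a, s), rfl⟩
  rw [shp, dif_pos h]
  exact (tr_inj h.choose_spec.symm).2

lemma tr_anch_shp {T : Set Cell} (h : IsTromino T) : tr (anch T) (shp T) = T := by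
  obtain ⟨a, s, rfl⟩ := tromino_iff.1 h
  rw [anch_tr, shp_tr]

lemma anch_mem {T : Set Cell} (h : IsTromino T) : anch T ∈ T := by
  have := mem_tr (anch T) (shp T)
  rwa [tr_anch_shp h] at this

lemma anch_klt_mem {T : Set Cell} (h : IsTromino T) {c : Cell} (hc : c ∈ T) :
    c = anch T ∨ klt (anch T) c := by
  rw [← tr_anch_shp h] at hc
  exact mem_tr_klt hc

noncomputable def rank (P : Set (Set Cell)) (T : Set Cell) : ℕ :=
  {T' ∈ P | klt (anch T') (anch T)}.ncard

noncomputable def Enc (P : Set (Set Cell)) : ℕ :=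
  if h : P.Finite then ∑ T ∈ h.toFinset, (shp T : ℕ) * 4 ^ rank P T else 0


lemma tiling_piece_subset {P : Set (Set Cell)} {S T : Set Cell}
    (hP : IsTromTiling P S) (hT : T ∈ P) : T ⊆ S :=
  hP.2.2 ▸ Set.subset_sUnion_of_mem hT

lemma tiling_finite {P : Set (Set Cell)} {S : Set Cell} (hS : S.Finite)
    (hP : IsTromTiling P S) : P.Finite :=
  hS.finite_subsets.subset (fun _ hp => tiling_piece_subset hP hp)

lemma exists_step {S : Set Cell} {P : Set (Set Cell)} (hS : S.Finite)
    (hP : IsTromTiling P S) {c0 : Cell} (hc0S : c0 ∈ S)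
    (hmin : ∀ d ∈ S, c0 = d ∨ klt c0 d) :
    ∃ s : Fin 4, tr c0 s ∈ P ∧
      IsTromTiling (P \ {tr c0 s}) (S \ tr c0 s) ∧
      Enc P = (s : ℕ) + 4 * Enc (P \ {tr c0 s}) ∧
      P.ncard = (P \ {tr c0 s}).ncard + 1 ∧
      S.ncard = (S \ tr c0 s).ncard + 3 := by
  classical
  obtain ⟨T0, hT0P, hc0T0⟩ : ∃ T0 ∈ P, c0 ∈ T0 := by
    rw [← hP.2.2] at hc0S; exact hc0S
  have hT0 : IsTromino T0 := hP.1 _ hT0P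
  have hanch : anch T0 = c0 := by
    rcases anch_klt_mem hT0 hc0T0 with h | h
    · exact h.symm
    · rcases hmin (anch T0) (tiling_piece_subset hP hT0P (anch_mem hT0)) with h2 | h2
      · exact h2.symm
      · exact absurd h (fun h => klt_asymm h h2)
  have hTr : tr c0 (shp T0) = T0 := by rw [← hanch]; exact tr_anch_shp hT0
  have h1 : IsTromTiling (P \ {T0}) (S \ T0) := by
    refine ⟨fun p hp => hP.1 p hp.1, hP.2.1.subset Set.diff_subset, ?_⟩
    ext x
    simp only [Set.mem_sUnion, Set.mem_diff, Set.mem_singleton_iff]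
    constructor
    · rintro ⟨T, ⟨hTP, hTne⟩, hxT⟩
      refine ⟨hP.2.2 ▸ Set.mem_sUnion.2 ⟨T, hTP, hxT⟩, fun hxT0 => ?_⟩
      exact Set.disjoint_left.1 (hP.2.1 hTP hT0P hTne) hxT hxT0
    · rintro ⟨hxS, hxT0⟩
      rw [← hP.2.2] at hxS
      obtain ⟨T, hTP, hxT⟩ := hxS
      exact ⟨T, ⟨hTP, fun h => hxT0 (h ▸ hxT)⟩, hxT⟩
  have hPfin := tiling_finite hS hP
  have hP'fin : (P \ {T0}).Finite := hPfin.subset Set.diff_subset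
  have hrank0 : rank P T0 = 0 := by
    rw [rank, Set.ncard_eq_zero (hPfin.subset (fun x hx => hx.1))]
    ext T'
    simp only [Set.mem_setOf_eq, Set.mem_empty_iff_false, iff_false, not_and]
    intro hT'P hk
    rw [hanch] at hk
    rcases hmin (anch T') (tiling_piece_subset hP hT'P (anch_mem (hP.1 _ hT'P))) with h | h
    · exact klt_irrefl (h ▸ hk)
    · exact klt_asymm hk h
  have hrank_shift : ∀ T ∈ P \ {T0}, rank P T = rank (P \ {T0}) T + 1 := by
    intro T hT
    have hTtrom := hP.1 T hT.1
    have hkT : klt c0 (anch T) := by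
      rcases hmin (anch T) (tiling_piece_subset hP hT.1 (anch_mem hTtrom)) with h | h
      · exfalso
        have hmem : c0 ∈ T := h ▸ anch_mem hTtrom
        exact Set.disjoint_left.1 (hP.2.1 hT.1 hT0P hT.2) hmem hc0T0
      · exact h
    have hset : {T' ∈ P | klt (anch T') (anch T)} =
        insert T0 {T' ∈ P \ {T0} | klt (anch T') (anch T)} := by
      ext T'
      simp only [Set.mem_setOf_eq, Set.mem_insert_iff, Set.mem_diff,
        Set.mem_singleton_iff]
      constructor
      · rintro ⟨hT'P, hk⟩
        by_cases hT' : T' = T0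
        · exact Or.inl hT'
        · exact Or.inr ⟨⟨hT'P, hT'⟩, hk⟩
      · rintro (rfl | ⟨⟨hT'P, _⟩, hk⟩)
        · exact ⟨hT0P, hanch ▸ hkT⟩
        · exact ⟨hT'P, hk⟩
    rw [rank, hset, Set.ncard_insert_of_notMem (fun h => h.1.2 rfl)
      (hP'fin.subset (fun x hx => hx.1)), rank]
  have hEnc : Enc P = ((shp T0 : ℕ)) + 4 * Enc (P \ {T0}) := by
    rw [Enc, dif_pos hPfin, Enc, dif_pos hP'fin]
    have hins : hPfin.toFinset = insert T0 hP'fin.toFinset := by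
      ext T
      simp only [Set.Finite.mem_toFinset, Finset.mem_insert, Set.mem_diff,
        Set.mem_singleton_iff]
      constructor
      · intro h
        by_cases hT : T = T0
        · exact Or.inl hT
        · exact Or.inr ⟨h, hT⟩
      · rintro (rfl | ⟨h, _⟩)
        · exact hT0P
        · exact h
    rw [hins, Finset.sum_insert (by simp [Set.Finite.mem_toFinset])]
    rw [hrank0, pow_zero, mul_one]
    congr 1
    rw [Finset.mul_sum]
    apply Finset.sum_congr rfl
    intro T hT
    rw [hrank_shift T (by simpa [Set.Finite.mem_toFinset] using hT), pow_succ]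
    ring
  have hc1 : P.ncard = (P \ {T0}).ncard + 1 :=
    (Set.ncard_diff_singleton_add_one hT0P hPfin).symm
  have hc2 : S.ncard = (S \ T0).ncard + 3 := by
    have h3 : T0.ncard = 3 := by rw [← hTr]; exact ncard_tr _ _
    have := Set.ncard_diff_add_ncard_of_subset (tiling_piece_subset hP hT0P) hS
    omega
  refine ⟨shp T0, ?_, ?_, ?_, ?_, ?_⟩ <;> rw [hTr] <;> assumption

lemma enc_main : ∀ (k : ℕ) (S : Set Cell), S.ncard = k → S.Finite →
    (∀ P, IsTromTiling P S → Enc P < 4 ^ P.ncard ∧ 3 * P.ncard = S.ncard) ∧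
    (∀ P Q, IsTromTiling P S → IsTromTiling Q S → Enc P = Enc Q → P = Q) := by
  intro k
  induction k using Nat.strong_induction_on with
  | _ k ih =>
  intro S hk hS
  rcases S.eq_empty_or_nonempty with rfl | hne
  · have hempty : ∀ P, IsTromTiling P (∅ : Set Cell) → P = ∅ := by
      intro P hP
      ext T
      simp only [Set.mem_empty_iff_false, iff_false]
      intro hT
      have h := anch_mem (hP.1 T hT)
      have h2 : anch T ∈ ⋃₀ P := ⟨T, hT, h⟩
      rw [hP.2.2] at h2
      exact h2
    constructor
    · intro P hP
      rw [hempty P hP]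
      constructor
      · rw [Enc, dif_pos Set.finite_empty]
        simp
      · simp
    · intro P Q hP hQ _
      rw [hempty P hP, hempty Q hQ]
  · obtain ⟨c0, hc0S, hmin⟩ := exists_klt_min hS hne
    constructor
    · intro P hP
      obtain ⟨s, hsP, hP', hE, hn1, hn3⟩ := exists_step hS hP hc0S hmin
      have hlt : (S \ tr c0 s).ncard < k := by omega
      have ih' := (ih _ hlt _ rfl hS.diff).1 _ hP'
      constructor
      · rw [hE, hn1, pow_succ]
        have h4 : (s : ℕ) < 4 := s.isLt
        have hM := ih'.1
        omega
      · omega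
    · intro P Q hP hQ hE
      obtain ⟨s, hsP, hP', hEP, _, hn3⟩ := exists_step hS hP hc0S hmin
      obtain ⟨t, htQ, hQ', hEQ, _, _⟩ := exists_step hS hQ hc0S hmin
      have hst : s = t := by
        have h1 : (s : ℕ) = (t : ℕ) := by
          rw [hEP, hEQ] at hE
          have := s.isLt; have := t.isLt
          omega
        exact Fin.ext h1
      subst hst
      have hE' : Enc (P \ {tr c0 s}) = Enc (Q \ {tr c0 s}) := by
        rw [hEP, hEQ] at hE; omega
      have hlt : (S \ tr c0 s).ncard < k := by omega
      have hPQ := (ih _ hlt _ rfl hS.diff).2 _ _ hP' hQ' hE'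
      have hPi : P = insert (tr c0 s) (P \ {tr c0 s}) := by
        rw [Set.insert_diff_singleton, Set.insert_eq_self.2 hsP]
      rw [hPi, hPQ, Set.insert_diff_singleton, Set.insert_eq_self.2 htQ]

lemma card_trom_tilings_le {S : Set Cell} (hS : S.Finite) :
    Nat.card {P : Set (Set Cell) // IsTromTiling P S} ≤ 4 ^ (S.ncard / 3) := by
  have hmain := enc_main S.ncard S rfl hS
  have hbound : ∀ P : {P : Set (Set Cell) // IsTromTiling P S},
      Enc P.1 < 4 ^ (S.ncard / 3) := by
    rintro ⟨P, hP⟩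
    obtain ⟨h1, h2⟩ := hmain.1 P hP
    have : P.ncard = S.ncard / 3 := by omega
    rwa [this] at h1
  have hinj : Function.Injective
      (fun P : {P : Set (Set Cell) // IsTromTiling P S} =>
        (⟨Enc P.1, hbound P⟩ : Fin (4 ^ (S.ncard / 3)))) := by
    rintro ⟨P, hP⟩ ⟨Q, hQ⟩ h
    simp only [Fin.mk.injEq] at h
    exact Subtype.ext (hmain.2 P Q hP hQ h)
  simpa using Nat.card_le_card_of_injective _ hinj


lemma rect_eq (m n : ℤ) : rect m n = ↑(Finset.Icc 1 m ×ˢ Finset.Icc 1 n) := by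
  ext ⟨i, j⟩
  simp only [rect, Set.mem_setOf_eq, Finset.coe_product, Set.mem_prod,
    Finset.mem_coe, Finset.mem_Icc]
  tauto

lemma rect_finite (m n : ℤ) : (rect m n).Finite := by
  rw [rect_eq]; exact (Finset.Icc 1 m ×ˢ Finset.Icc 1 n).finite_toSet

lemma rect_ncard (m n : ℕ) : (rect (m : ℤ) (n : ℤ)).ncard = m * n := by
  rw [rect_eq, Set.ncard_coe_finset, Finset.card_product, Int.card_Icc, Int.card_Icc]
  have h1 : ((m : ℤ) + 1 - 1).toNat = m := by omega
  have h2 : ((n : ℤ) + 1 - 1).toNat = n := by omega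
  rw [h1, h2]

lemma domino_tilings_finite {S : Set Cell} (hS : S.Finite) :
    {P : Set (Set Cell) | IsDominoTiling P S}.Finite :=
  hS.finite_subsets.finite_subsets.subset
    (fun _ hP _ hp => hP.2.2 ▸ Set.subset_sUnion_of_mem hp)

lemma horiz_tiling (m n : ℤ) :
    IsDominoTiling
      {D | ∃ i j : ℤ, 1 ≤ i ∧ i ≤ m ∧ 1 ≤ j ∧ j ≤ n ∧ D = {(i, 2*j-1), (i, 2*j)}}
      (rect m (2*n)) := by
  refine ⟨?_, ?_, ?_⟩
  · rintro p ⟨i, j, _, _, _, _, rfl⟩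
    exact Or.inl ⟨i, 2*j-1, by rw [show (2*j - 1 + 1 : ℤ) = 2*j by ring]⟩
  · rintro D ⟨i, j, h1, h2, h3, h4, rfl⟩ D' ⟨i', j', h1', h2', h3', h4', rfl⟩ hne
    rw [Function.onFun, Set.disjoint_left]
    rintro ⟨x, y⟩ hx hx'
    simp only [id, Set.mem_insert_iff, Set.mem_singleton_iff, Prod.mk.injEq] at hx hx'
    have : i = i' ∧ j = j' := by omega
    exact hne (by rw [this.1, this.2])
  · ext ⟨x, y⟩
    simp only [Set.mem_sUnion, Set.mem_setOf_eq, rect]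
    constructor
    · rintro ⟨D, ⟨i, j, h1, h2, h3, h4, rfl⟩, hx⟩
      simp only [Set.mem_insert_iff, Set.mem_singleton_iff, Prod.mk.injEq] at hx
      omega
    · rintro ⟨hx1, hx2, hy1, hy2⟩
      refine ⟨_, ⟨x, (y+1)/2, by omega, by omega, by omega, by omega, rfl⟩, ?_⟩
      simp only [Set.mem_insert_iff, Set.mem_singleton_iff, Prod.mk.injEq, true_and]
      omega

lemma vert_tiling (m n : ℤ) :
    IsDominoTiling
      {D | ∃ i j : ℤ, 1 ≤ i ∧ i ≤ m ∧ 1 ≤ j ∧ j ≤ n ∧ D = {(2*i-1, j), (2*i, j)}}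
      (rect (2*m) n) := by
  refine ⟨?_, ?_, ?_⟩
  · rintro p ⟨i, j, _, _, _, _, rfl⟩
    exact Or.inr ⟨2*i-1, j, by rw [show (2*i - 1 + 1 : ℤ) = 2*i by ring]⟩
  · rintro D ⟨i, j, h1, h2, h3, h4, rfl⟩ D' ⟨i', j', h1', h2', h3', h4', rfl⟩ hne
    rw [Function.onFun, Set.disjoint_left]
    rintro ⟨x, y⟩ hx hx'
    simp only [id, Set.mem_insert_iff, Set.mem_singleton_iff, Prod.mk.injEq] at hx hx'
    have : i = i' ∧ j = j' := by omega
    exact hne (by rw [this.1, this.2])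
  · ext ⟨x, y⟩
    simp only [Set.mem_sUnion, Set.mem_setOf_eq, rect]
    constructor
    · rintro ⟨D, ⟨i, j, h1, h2, h3, h4, rfl⟩, hx⟩
      simp only [Set.mem_insert_iff, Set.mem_singleton_iff, Prod.mk.injEq] at hx
      omega
    · rintro ⟨hx1, hx2, hy1, hy2⟩
      refine ⟨_, ⟨(x+1)/2, y, by omega, by omega, by omega, by omega, rfl⟩, ?_⟩
      simp only [Set.mem_insert_iff, Set.mem_singleton_iff, Prod.mk.injEq, and_true]
      omega

end TB

/-- Upper bound on the number of tromino tilings via domino tilings. -/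
theorem tromino_tilings_upper_bound (m n : ℕ) (hm : 0 < m) (hn : 0 < n)
    (hdvd : 3 ∣ m * n) :
    Nat.card {P : Set (Set Cell) // IsTromTiling P (rect (m : ℤ) (n : ℤ))} ≤
      2 ^ (4 * m * n / 3) *
        min (Nat.card {P : Set (Set Cell) // IsDominoTiling P (rect (m : ℤ) (2 * n : ℤ))})
            (Nat.card {P : Set (Set Cell) // IsDominoTiling P (rect (2 * m : ℤ) (n : ℤ))}) := by
  classical
  have h1 : Nat.card {P : Set (Set Cell) // IsTromTiling P (rect (m : ℤ) (n : ℤ))} ≤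
      4 ^ (m * n / 3) := by
    have h := TB.card_trom_tilings_le (TB.rect_finite (m : ℤ) (n : ℤ))
    rwa [TB.rect_ncard] at h
  haveI f1 : Finite {P : Set (Set Cell) // IsDominoTiling P (rect (m : ℤ) (2 * n : ℤ))} :=
    (TB.domino_tilings_finite (TB.rect_finite _ _)).to_subtype
  haveI f2 : Finite {P : Set (Set Cell) // IsDominoTiling P (rect (2 * m : ℤ) (n : ℤ))} :=
    (TB.domino_tilings_finite (TB.rect_finite _ _)).to_subtype
  haveI e1 : Nonempty {P : Set (Set Cell) // IsDominoTiling P (rect (m : ℤ) (2 * n : ℤ))} :=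
    ⟨⟨_, TB.horiz_tiling (m : ℤ) (n : ℤ)⟩⟩
  haveI e2 : Nonempty {P : Set (Set Cell) // IsDominoTiling P (rect (2 * m : ℤ) (n : ℤ))} :=
    ⟨⟨_, TB.vert_tiling (m : ℤ) (n : ℤ)⟩⟩
  have hpos1 : 0 < Nat.card {P : Set (Set Cell) // IsDominoTiling P (rect (m : ℤ) (2 * n : ℤ))} :=
    Nat.card_pos
  have hpos2 : 0 < Nat.card {P : Set (Set Cell) // IsDominoTiling P (rect (2 * m : ℤ) (n : ℤ))} :=
    Nat.card_pos
  obtain ⟨t, ht⟩ := hdvd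
  have h3 : m * n / 3 = t := by omega
  have h4 : 4 * m * n / 3 = 4 * t := by
    have h5 : 4 * m * n = 3 * (4 * t) := by
      calc 4 * m * n = 4 * (m * n) := by ring
        _ = 3 * (4 * t) := by rw [ht]; ring
    omega
  have h6 : (4 : ℕ) ^ (m * n / 3) ≤ 2 ^ (4 * m * n / 3) := by
    rw [h3, h4, show (4 : ℕ) = 2 ^ 2 from rfl, ← pow_mul]
    exact Nat.pow_le_pow_right (by norm_num) (by omega)
  exact h1.trans (h6.trans (Nat.le_mul_of_pos_right _ (lt_min hpos1 hpos2)))
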